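/- Let N be a positive natural number, and work in ℝ^N with the standard inner product ⟨·,·⟩ and componentwise product ⊙. Let S : ℝ^N → ℝ^N be a linear map with ⟨S v, v⟩ = 0 for all v. Let a, u, q ∈ ℝ^N and set k = S( u + (1/6) q + (1/3) a ⊙ u ) and l = 2 a ⊙ k. Then ⟨u, k⟩ + (1/6) ⟨u, l⟩ + (1/6) ⟨k, q⟩ = 0. -/

import Mathlib

open scoped RealInnerProductSpace

/-- Componentwise (pointwise) product on `EuclideanSpace ℝ (Fin N)`. -/
def cwMul {N : ℕ} (v w : EuclideanSpace ℝ (Fin N)) : EuclideanSpace ℝ (Fin N) :=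
  WithLp.toLp 2 (fun i => v i * w i)

lemma inner_cwMul_swap {N : ℕ} (a u k : EuclideanSpace ℝ (Fin N)) :
    ⟪u, cwMul a k⟫ = ⟪cwMul a u, k⟫ := by
  simp only [PiLp.inner_apply, cwMul, RCLike.inner_apply, conj_trivial, PiLp.toLp_apply]
  exact Finset.sum_congr rfl fun i _ => by ring

/-- the key stage identity in the proof of Theorem 2.3:
with k = S(u + q/6 + (1/3) a ⊙ u) and l = 2 a ⊙ k, one has
⟨u,k⟩ + (1/6)⟨u,l⟩ + (1/6)⟨k,q⟩ = 0. -/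
theorem eq_scheme_stage_identity
    (N : ℕ) (hN : 0 < N)
    (S : EuclideanSpace ℝ (Fin N) →ₗ[ℝ] EuclideanSpace ℝ (Fin N))
    (hS : ∀ v : EuclideanSpace ℝ (Fin N), ⟪S v, v⟫ = 0)
    (a u q k l : EuclideanSpace ℝ (Fin N))
    (hk : k = S (u + (1/6 : ℝ) • q + (1/3 : ℝ) • cwMul a u))
    (hl : l = (2 : ℝ) • cwMul a k) :
    ⟪u, k⟫ + (1/6 : ℝ) * ⟪u, l⟫ + (1/6 : ℝ) * ⟪k, q⟫ = 0 := by
  have h0 := hS (u + (1/6 : ℝ) • q + (1/3 : ℝ) • cwMul a u)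
  rw [← hk, inner_add_right, inner_add_right, real_inner_smul_right,
    real_inner_smul_right] at h0
  rw [hl, real_inner_smul_right, inner_cwMul_swap]
  have c1 : ⟪k, u⟫ = ⟪u, k⟫ := real_inner_comm _ _
  have c2 : ⟪k, cwMul a u⟫ = ⟪cwMul a u, k⟫ := real_inner_comm _ _
  linarith
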